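/- Covering lemma: Let σ be a finite relational signature. For every k, r ≥ 0, every σ-structure A, and every tuple a⃗ of at most k elements of A, there exist a tuple b⃗ of at most k elements of A and a radius R with r ≤ R ≤ 4^k·r such that the r-neighborhood of a⃗ is contained (as a set of elements) in the R-neighborhood of b⃗, and for all distinct components b, b' of b⃗ the 3R-neighborhoods N_A(b,3R) and N_A(b',3R) are disjoint. -/

import Mathlib

open FirstOrder FirstOrder.Language

universe u v w

namespace Gaifman

/-- Two elements are adjacent in the Gaifman graph of a structure: they are distinct and
occur together in some tuple belonging to some relation. -/
def Adj (L : FirstOrder.Language.{u, u}) (M : Type u) [L.Structure M] (a b : M) : Prop :=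
  a ≠ b ∧ ∃ (n : ℕ) (R : L.Relations n) (t : Fin n → M),
    Structure.RelMap R t ∧ a ∈ Set.range t ∧ b ∈ Set.range t

/-- `CloseLE L M r a b` holds iff the Gaifman distance from `a` to `b` is at most `r`. -/
def CloseLE (L : FirstOrder.Language.{u, u}) (M : Type u) [L.Structure M] :
    ℕ → M → M → Prop
  | 0, a, b => a = b
  | r + 1, a, b => CloseLE L M r a b ∨ ∃ c, CloseLE L M r a c ∧ Adj L M c b

lemma closeLE_self (L : FirstOrder.Language.{u, u}) (M : Type u) [L.Structure M] :
    ∀ (r : ℕ) (a : M), CloseLE L M r a a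
  | 0, _ => rfl
  | r + 1, a => Or.inl (closeLE_self L M r a)

/-- The `r`-neighborhood of a tuple: all elements at Gaifman distance at most `r`
from some component of the tuple. -/
def Ball (L : FirstOrder.Language.{u, u}) {M : Type u} [L.Structure M] {m : ℕ}
    (a : Fin m → M) (r : ℕ) : Set M :=
  {x | ∃ i, CloseLE L M r (a i) x}

lemma self_mem_ball (L : FirstOrder.Language.{u, u}) {M : Type u} [L.Structure M] {m : ℕ}
    (a : Fin m → M) (r : ℕ) (i : Fin m) :
    a i ∈ Ball L a r := ⟨i, closeLE_self L M r (a i)⟩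

/-- The substructure induced on a subset of a structure over a relational language. -/
def inducedStructure (L : FirstOrder.Language.{u, u}) [L.IsRelational] {M : Type u}
    [L.Structure M] (s : Set M) : L.Structure s where
  funMap {n} f _ := isEmptyElim f
  RelMap {n} R t := Structure.RelMap R fun i => (t i : M)

/-- A formula is `r`-local if its truth at a tuple only depends on the induced substructure on
the `r`-neighborhood of the tuple. -/
def IsLocal {L : FirstOrder.Language.{u, u}} [L.IsRelational] (r : ℕ) {m : ℕ}
    (φ : L.Formula (Fin m)) : Prop :=
  ∀ (M : Type u) [L.Structure M] (a : Fin m → M),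
    φ.Realize a ↔
      (letI := inducedStructure L (Ball L a r)
       φ.Realize fun i => (⟨a i, self_mem_ball L a r i⟩ : Ball L a r))

/-- Quantifier rank of a (bounded) formula. -/
def qr {L : FirstOrder.Language.{u, u}} {α : Type v} : ∀ {n : ℕ}, L.BoundedFormula α n → ℕ
  | _, .falsum => 0
  | _, .equal _ _ => 0
  | _, .rel _ _ => 0
  | _, .imp f g => max (qr f) (qr g)
  | _, .all f => qr f + 1

/-- The components of a tuple are at pairwise Gaifman distance greater than `s`. -/
def Far (L : FirstOrder.Language.{u, u}) (M : Type u) [L.Structure M] (s : ℕ) {m : ℕ}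
    (a : Fin m → M) : Prop :=
  ∀ i j : Fin m, i ≠ j → ¬ CloseLE L M s (a i) (a j)

/-- `A ≼_{r,q,k} B` : every sentence `∃ x₁ … x_k, τ` with `τ` an `r`-local formula of
quantifier rank at most `q` that holds in `A` also holds in `B`. -/
def LocLE (L : FirstOrder.Language.{u, u}) [L.IsRelational] (r q k : ℕ) (M N : Type u)
    [L.Structure M] [L.Structure N] : Prop :=
  ∀ τ : L.Formula (Fin k), IsLocal r τ → qr τ ≤ q →
    (∃ a : Fin k → M, τ.Realize a) → ∃ b : Fin k → N, τ.Realize b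

/-- The preorder `≼_{r,q,k}` with radius and rank parameters in `ℕ ∪ {∞}`: the intersection
over all finite parameters below the given ones. -/
def LocLEE (L : FirstOrder.Language.{u, u}) [L.IsRelational] (r q : ℕ∞) (k : ℕ)
    (M N : Type u) [L.Structure M] [L.Structure N] : Prop :=
  ∀ r' q' : ℕ, (r' : ℕ∞) ≤ r → (q' : ℕ∞) ≤ q → LocLE L r' q' k M N

/-- Local elementary embedding. -/
def IsLocalElemEmb (L : FirstOrder.Language.{u, u}) [L.IsRelational] {M N : Type u}
    [L.Structure M] [L.Structure N] (h : M → N) : Prop :=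
  ∀ (k r : ℕ) (a : Fin k → M) (φ : L.Formula (Fin k)), IsLocal r φ →
    (φ.Realize a ↔ φ.Realize (h ∘ a))

/-- Disjoint union of two structures over a relational language. -/
def sumStructure (L : FirstOrder.Language.{u, u}) [L.IsRelational] (M N : Type u)
    [L.Structure M] [L.Structure N] : L.Structure (M ⊕ N) where
  funMap {n} f _ := isEmptyElim f
  RelMap {n} R t :=
    (∃ tm : Fin n → M, t = Sum.inl ∘ tm ∧ Structure.RelMap R tm) ∨
    (∃ tn : Fin n → N, t = Sum.inr ∘ tn ∧ Structure.RelMap R tn)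

/-- A bundled `L`-structure. -/
structure Struc (L : FirstOrder.Language.{u, u}) : Type (u + 1) where
  carrier : Type u
  str : L.Structure carrier

attribute [instance] Struc.str

/-- The `(q,r)`-local type of a tuple. -/
def localType (L : FirstOrder.Language.{u, u}) [L.IsRelational] (r q : ℕ) {M : Type u}
    [L.Structure M] {m : ℕ} (a : Fin m → M) : Set (L.Formula (Fin m)) :=
  {τ | IsLocal r τ ∧ qr τ ≤ q ∧ τ.Realize a}

/-- The collection of `(q,r)`-local types of tuples of at most `k` elements. -/
def Specter (L : FirstOrder.Language.{u, u}) [L.IsRelational] (r q k : ℕ) (M : Type u)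
    [L.Structure M] : Set (Σ m : ℕ, Set (L.Formula (Fin m))) :=
  {p | ∃ m, m ≤ k ∧ ∃ a : Fin m → M, p = ⟨m, localType L r q a⟩}

/-- The data of a basic local sentence
`∃ x₁ … x_k, (⋀_{i ≠ j} d(xᵢ,xⱼ) > 2r ∧ ⋀ᵢ ψ(xᵢ))`. -/
structure BasicLocal (L : FirstOrder.Language.{u, u}) [L.IsRelational] where
  k : ℕ
  r : ℕ
  ψ : L.Formula (Fin 1)
  isLocal : IsLocal r ψ

/-- Truth of a basic local sentence in a structure. -/
def BasicLocal.Holds {L : FirstOrder.Language.{u, u}} [L.IsRelational] (b : BasicLocal L)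
    (M : Type u) [L.Structure M] : Prop :=
  ∃ a : Fin b.k → M, Far L M (2 * b.r) a ∧ ∀ i, b.ψ.Realize fun _ => a i

/-- The data of an asymmetric basic local sentence
`∃ x₁ … x_k, (⋀_{i ≠ j} d(xᵢ,xⱼ) > 2r ∧ ⋀ᵢ ψᵢ(xᵢ))`. -/
structure AsymBasicLocal (L : FirstOrder.Language.{u, u}) [L.IsRelational] where
  k : ℕ
  r : ℕ
  ψ : Fin k → L.Formula (Fin 1)
  isLocal : ∀ i, IsLocal r (ψ i)

/-- Truth of an asymmetric basic local sentence in a structure. -/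
def AsymBasicLocal.Holds {L : FirstOrder.Language.{u, u}} [L.IsRelational]
    (d : AsymBasicLocal L) (M : Type u) [L.Structure M] : Prop :=
  ∃ a : Fin d.k → M, Far L M (2 * d.r) a ∧ ∀ i, (d.ψ i).Realize fun _ => a i

/-- Positive Boolean combinations (conjunction and disjunction only). -/
inductive PosBool (α : Type w) : Type w
  | base : α → PosBool α
  | conj : PosBool α → PosBool α → PosBool α
  | disj : PosBool α → PosBool α → PosBool α

/-- Evaluation of a positive Boolean combination against a truth assignment. -/
def PosBool.Eval {α : Type w} (v : α → Prop) : PosBool α → Prop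
  | .base a => v a
  | .conj p q => p.Eval v ∧ q.Eval v
  | .disj p q => p.Eval v ∨ q.Eval v

/-- `φ` is equivalent over the class `C` to an existential local sentence `∃ x⃗, τ(x⃗)`. -/
def EquivToExistLocal {L : FirstOrder.Language.{u, u}} [L.IsRelational]
    (C : Set (Struc L)) (φ : L.Sentence) : Prop :=
  ∃ (k r : ℕ) (τ : L.Formula (Fin k)), IsLocal r τ ∧
    ∀ S ∈ C, (S.carrier ⊨ φ ↔ ∃ a : Fin k → S.carrier, τ.Realize a)

/-- `A ⊆ᵢ B` : `A` is isomorphic to an induced substructure of `B`. -/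
def SubInd {L : FirstOrder.Language.{u, u}} (A B : Struc L) : Prop :=
  Nonempty (A.carrier ↪[L] B.carrier)

/-- A hereditary class: closed under induced substructures. -/
def Hereditary {L : FirstOrder.Language.{u, u}} (C : Set (Struc L)) : Prop :=
  ∀ B ∈ C, ∀ A : Struc L, SubInd A B → A ∈ C

/-- `φ` is preserved under extensions over `C`. -/
def PreservedUnderExt {L : FirstOrder.Language.{u, u}} (C : Set (Struc L))
    (φ : L.Sentence) : Prop :=
  ∀ A ∈ C, ∀ B ∈ C, A.carrier ⊨ φ → SubInd A B → B.carrier ⊨ φ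

/-- `C` is closed under disjoint unions with finite structures. -/
def ClosedUnderDisjointUnions {L : FirstOrder.Language.{u, u}} [L.IsRelational]
    (C : Set (Struc L)) : Prop :=
  ∀ A ∈ C, ∀ B : Struc L, Finite B.carrier →
    (⟨A.carrier ⊕ B.carrier, sumStructure L A.carrier B.carrier⟩ : Struc L) ∈ C

/-- `Balls(C, r, k)` : the structures isomorphic to an `r`-neighborhood of a tuple of at most
`k` elements of a structure of `C`. -/
def BallsClass {L : FirstOrder.Language.{u, u}} [L.IsRelational] (C : Set (Struc L))
    (r k : ℕ) : Set (Struc L) :=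
  {T | ∃ A ∈ C, ∃ m, m ≤ k ∧ ∃ a : Fin m → A.carrier,
    letI := inducedStructure L (Ball L a r)
    Nonempty (T.carrier ≃[L] ↥(Ball L a r))}

/-- A `⊆ᵢ`-minimal model of `φ` in `C`: a model in `C` no proper induced substructure of
which satisfies `φ`. -/
def IsMinimalModel {L : FirstOrder.Language.{u, u}} [L.IsRelational] (C : Set (Struc L))
    (φ : L.Sentence) (A : Struc L) : Prop :=
  A ∈ C ∧ A.carrier ⊨ φ ∧
    ∀ s : Set A.carrier,
      (letI := inducedStructure L s
       (↥s) ⊨ φ) → s = Set.univ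

/-- Preservation under extensions holds over the class `D`: every sentence preserved under
extensions over `D` is equivalent over `D` to an existential sentence. -/
def PresExtHolds {L : FirstOrder.Language.{u, u}} [L.IsRelational]
    (D : Set (Struc L)) : Prop :=
  ∀ φ : L.Sentence, PreservedUnderExt D φ →
    ∃ (n : ℕ) (θ : L.Formula (Fin n)), θ.IsQF ∧
      ∀ S ∈ D, (S.carrier ⊨ φ ↔ ∃ a : Fin n → S.carrier, θ.Realize a)

end Gaifman

open Gaifman

namespace Gaifman

variable {L : FirstOrder.Language.{u, u}} {M : Type u} [L.Structure M]

lemma adj_symm {a b : M} (h : Adj L M a b) : Adj L M b a := by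
  obtain ⟨hne, n, R, t, hR, ha, hb⟩ := h
  exact ⟨hne.symm, n, R, t, hR, hb, ha⟩

lemma closeLE_mono {r s : ℕ} (hrs : r ≤ s) {a b : M} (h : CloseLE L M r a b) :
    CloseLE L M s a b := by
  induction hrs with
  | refl => exact h
  | step _ ih => exact Or.inl ih

lemma closeLE_trans : ∀ {q p : ℕ} {a b c : M},
    CloseLE L M p a b → CloseLE L M q b c → CloseLE L M (p + q) a c
  | 0, _, _, _, _, h1, h2 => h2 ▸ h1
  | _ + 1, _, _, _, _, h1, Or.inl h2 => Or.inl (closeLE_trans h1 h2)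
  | _ + 1, _, _, _, _, h1, Or.inr ⟨d, hbd, hdc⟩ =>
      Or.inr ⟨d, closeLE_trans h1 hbd, hdc⟩

lemma closeLE_symm : ∀ {r : ℕ} {a b : M}, CloseLE L M r a b → CloseLE L M r b a
  | 0, _, _, h => h.symm
  | _ + 1, _, _, Or.inl h => Or.inl (closeLE_symm h)
  | r + 1, a, b, Or.inr ⟨c, hac, hcb⟩ => by
      have h1 : CloseLE L M 1 b c := Or.inr ⟨b, rfl, adj_symm hcb⟩
      have h2 := closeLE_trans h1 (closeLE_symm hac)
      rwa [Nat.add_comm] at h2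

lemma covering_aux (L : FirstOrder.Language.{u, u}) (A : Type u) [L.Structure A] :
    ∀ (m : ℕ) (r : ℕ) (a : Fin m → A), ∃ m' : ℕ, m' ≤ m ∧ ∃ (b : Fin m' → A) (R : ℕ),
      r ≤ R ∧ R ≤ 4 ^ m * r ∧ Ball L a r ⊆ Ball L b R ∧
      ∀ i j : Fin m', b i ≠ b j →
        Disjoint (Ball L (fun _ : Fin 1 => b i) (3 * R))
          (Ball L (fun _ : Fin 1 => b j) (3 * R)) := by
  intro m
  induction m with
  | zero =>
    intro r a
    exact ⟨0, le_refl 0, a, r, le_refl r, by simp, subset_rfl, fun i => i.elim0⟩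
  | succ m ih =>
    intro r a
    by_cases h : ∃ i j : Fin (m + 1), a i ≠ a j ∧
        ¬ Disjoint (Ball L (fun _ : Fin 1 => a i) (3 * r))
          (Ball L (fun _ : Fin 1 => a j) (3 * r))
    · obtain ⟨i, j, hij, hnd⟩ := h
      obtain ⟨x, hx1, hx2⟩ := Set.not_disjoint_iff.mp hnd
      obtain ⟨_, hxi⟩ := hx1
      obtain ⟨_, hxj⟩ := hx2
      have hij' : i ≠ j := fun e => hij (congrArg a e)
      obtain ⟨i', hi'⟩ := Fin.exists_succAbove_eq hij'
      set a' : Fin m → A := fun l => if j.succAbove l = i then x else a (j.succAbove l)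
        with ha'
      obtain ⟨m', hm', b, R, hR1, hR2, hsub, hdisj⟩ := ih (4 * r) a'
      refine ⟨m', hm'.trans (Nat.le_succ m), b, R, le_trans (by omega) hR1,
        hR2.trans (le_of_eq (by ring)), fun y hy => hsub ?_, hdisj⟩
      obtain ⟨l, hl⟩ := hy
      have key : ∀ z : Fin (m + 1), a l = a z → CloseLE L A (3 * r) x (a z) → y ∈ Ball L a' (4 * r) := by
        intro z hz hcl
        rw [hz] at hl
        have h3 : CloseLE L A (3 * r + r) x y := closeLE_trans hcl hl
        rw [show 3 * r + r = 4 * r by ring] at h3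
        refine ⟨i', ?_⟩
        rw [show a' i' = x from if_pos hi']
        exact h3
      by_cases hli : a l = a i
      · exact key i hli (closeLE_symm hxi)
      · by_cases hlj : a l = a j
        · exact key j hlj (closeLE_symm hxj)
        · have hlj' : l ≠ j := fun e => hlj (congrArg a e)
          obtain ⟨l', hl'⟩ := Fin.exists_succAbove_eq hlj'
          have : a' l' = a l := by
            rw [ha']
            simp only [hl']
            exact if_neg (fun e => hli (congrArg a e))
          exact ⟨l', this ▸ closeLE_mono (by omega) hl⟩
    · push_neg at h
      exact ⟨m + 1, le_refl _, a, r, le_refl r,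
        Nat.le_mul_of_pos_left r (by positivity), subset_rfl, h⟩

end Gaifman


/-- **Covering lemma.** For every `k, r ≥ 0`, every structure `A` and every tuple `a` of at most
`k` elements of `A`, there are a tuple `b` of at most `k` elements and a radius `r ≤ R ≤ 4^k·r`
such that the `r`-neighborhood of `a` is contained in the `R`-neighborhood of `b` and the
`3R`-neighborhoods of distinct components of `b` are pairwise disjoint. -/
theorem covering_lemma (L : FirstOrder.Language.{u, u}) [L.IsRelational]
    [Finite (Σ n, L.Relations n)] (k r : ℕ) (A : Type u) [L.Structure A]
    {m : ℕ} (hm : m ≤ k) (a : Fin m → A) :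
    ∃ m' : ℕ, m' ≤ k ∧ ∃ (b : Fin m' → A) (R : ℕ),
      r ≤ R ∧ R ≤ 4 ^ k * r ∧ Ball L a r ⊆ Ball L b R ∧
      ∀ i j : Fin m', b i ≠ b j →
        Disjoint (Ball L (fun _ : Fin 1 => b i) (3 * R))
          (Ball L (fun _ : Fin 1 => b j) (3 * R)) := by
  obtain ⟨m', hm', b, R, hR1, hR2, hsub, hdisj⟩ := covering_aux L A m r a
  refine ⟨m', hm'.trans hm, b, R, hR1, hR2.trans ?_, hsub, hdisj⟩
  exact Nat.mul_le_mul_right r (Nat.pow_le_pow_right (by norm_num) hm)
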